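/- arXiv:0806.0100 — 4 statements merged into one kernel-verified Lean document; each statement's English description precedes it below -/
import Mathlib

section
/- Let p ≥ 2 and α₁, α₂ > 0. Then there exists a constant c > 0, depending only on α₁, α₂ and p, with the following property: for all real numbers a, s, z, ψ₁ and all ψ₂ ≥ 0, if a·s ≤ −α₁|s|^p + ψ₁ and |a| ≤ α₂|s|^{p−1} + ψ₂, then a·(s − z) ≤ −(α₁/2)|s|^p + ψ₁ + (1/2)ψ₂² + (1/2)z² + c·|z|^p. -/
/-- Pointwise Young-type estimate for the FitzHugh–Nagumo nonlinearity:
if `p ≥ 2` and `α₁, α₂ > 0`, there is a constant `c > 0` depending only on `α₁, α₂, p` such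
that whenever `a * s ≤ -α₁|s|^p + ψ₁` and `|a| ≤ α₂|s|^(p-1) + ψ₂` (with `ψ₂ ≥ 0`), one has
`a * (s - z) ≤ -(α₁/2)|s|^p + ψ₁ + ψ₂²/2 + z²/2 + c|z|^p`. -/
theorem stmt0 (p α₁ α₂ : ℝ) (hp : 2 ≤ p) (hα₁ : 0 < α₁) (hα₂ : 0 < α₂) :
    ∃ c : ℝ, 0 < c ∧
      ∀ a s z ψ₁ ψ₂ : ℝ, 0 ≤ ψ₂ →
        a * s ≤ -α₁ * |s| ^ p + ψ₁ →
        |a| ≤ α₂ * |s| ^ (p - 1) + ψ₂ →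
        a * (s - z) ≤ -(α₁ / 2) * |s| ^ p + ψ₁ + (1 / 2) * ψ₂ ^ 2
          + (1 / 2) * z ^ 2 + c * |z| ^ p := by
  have hp1 : (1 : ℝ) < p := by linarith
  set q : ℝ := p / (p - 1) with hq
  have hpq : p.HolderConjugate q := Real.HolderConjugate.conjExponent hp1
  have hq0 : 0 < q := hpq.symm.pos
  set lam : ℝ := (α₁ * q / 2) ^ (1 / q) with hlam
  have hbase : 0 < α₁ * q / 2 := by positivity
  have hlam0 : 0 < lam := Real.rpow_pos_of_pos hbase _
  have hlamq : lam ^ q = α₁ * q / 2 := by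
    rw [hlam, ← Real.rpow_mul hbase.le, one_div, inv_mul_cancel₀ hq0.ne', Real.rpow_one]
  refine ⟨(α₂ / lam) ^ p / p, by positivity, ?_⟩
  intro a s z ψ₁ ψ₂ hψ₂ h1 h2
  have habs : a * (s - z) ≤ a * s + |a| * |z| := by
    have : a * (s - z) = a * s + (-(a * z)) := by ring
    rw [this]
    have := neg_abs_le (a * z)
    have h3 : -(a*z) ≤ |a| * |z| := by
      rw [← abs_mul]; exact neg_le_abs _
    linarith
  have h4 : |a| * |z| ≤ α₂ * |s| ^ (p - 1) * |z| + ψ₂ * |z| := by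
    have := mul_le_mul_of_nonneg_right h2 (abs_nonneg z)
    linarith [this]
  have h5 : ψ₂ * |z| ≤ (1/2) * ψ₂ ^ 2 + (1/2) * z ^ 2 := by
    nlinarith [sq_nonneg (ψ₂ - |z|), sq_abs z]
  -- Young's inequality term
  have hs : (0:ℝ) ≤ |s| := abs_nonneg s
  have hyoung : (lam * |s| ^ (p - 1)) * ((α₂ / lam) * |z|) ≤
      (lam * |s| ^ (p - 1)) ^ q / q + ((α₂ / lam) * |z|) ^ p / p := by
    have := Real.young_inequality_of_nonneg
      (a := (α₂ / lam) * |z|) (b := lam * |s| ^ (p - 1))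
      (by positivity) (by positivity) hpq
    linarith [this]
  have hexp : (|s| ^ (p - 1)) ^ q = |s| ^ p := by
    rw [← Real.rpow_mul hs]
    congr 1
    exact hpq.sub_one_mul_conj
  have hlhs : (lam * |s| ^ (p - 1)) * ((α₂ / lam) * |z|) = α₂ * |s| ^ (p-1) * |z| := by
    field_simp
  have hterm1 : (lam * |s| ^ (p - 1)) ^ q / q = (α₁ / 2) * |s| ^ p := by
    rw [Real.mul_rpow hlam0.le (Real.rpow_nonneg hs _), hexp, hlamq]
    field_simp
  have hterm2 : ((α₂ / lam) * |z|) ^ p / p = ((α₂ / lam) ^ p / p) * |z| ^ p := by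
    rw [Real.mul_rpow (by positivity) (abs_nonneg z)]
    ring
  have hY : α₂ * |s| ^ (p-1) * |z| ≤ (α₁ / 2) * |s| ^ p + ((α₂ / lam) ^ p / p) * |z| ^ p := by
    rw [← hterm1, ← hterm2, ← hlhs]; exact hyoung
  linarith
end

section
/- There exists a constant c > 0 depending only on α₁, α₂ and p such that the following holds. Let f satisfy the dissipativity conditions, let u, z : ℝ^n → ℝ be measurable with u, z ∈ L²(ℝ^n) ∩ L^p(ℝ^n), and assume that x ↦ f(x, u(x))·(u(x) − z(x)) is integrable on ℝ^n. Then ∫_{ℝ^n} f(x, u(x))·(u(x) − z(x)) dx ≤ −(α₁/2)‖u‖_{L^p}^p + ‖ψ₁‖_{L¹} + (1/2)‖ψ₂‖_{L²}² + (1/2)‖z‖_{L²}² + c‖z‖_{L^p}^p. -/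
open MeasureTheory Set

/-- Elementary Young-type inequality: `a^(p-1) * b ≤ a^p + b^p` for nonnegative reals. -/
lemma young_aux (p : ℝ) (hp : 2 ≤ p) (a b : ℝ) (ha : 0 ≤ a) (hb : 0 ≤ b) :
    a ^ (p - 1) * b ≤ a ^ p + b ^ p := by
  have hp1 : (1:ℝ) ≤ p - 1 := by linarith
  rcases le_total a b with h | h
  · calc a ^ (p - 1) * b ≤ b ^ (p - 1) * b :=
          mul_le_mul_of_nonneg_right (Real.rpow_le_rpow ha h (by linarith)) hb
    _ = b ^ p := by
          rcases eq_or_lt_of_le hb with hb0 | hb0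
          · rw [← hb0]; rw [Real.zero_rpow (by positivity), Real.zero_rpow (by positivity)]; ring
          · rw [← Real.rpow_add_one hb0.ne' (p-1)]
            norm_num
    _ ≤ a ^ p + b ^ p := by
          have : 0 ≤ a ^ p := Real.rpow_nonneg ha p
          linarith
  · calc a ^ (p - 1) * b ≤ a ^ (p - 1) * a :=
          mul_le_mul_of_nonneg_left h (Real.rpow_nonneg ha _)
    _ = a ^ p := by
          rcases eq_or_lt_of_le ha with ha0 | ha0
          · rw [← ha0]; rw [Real.zero_rpow (by positivity), Real.zero_rpow (by positivity)]; ring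
          · rw [← Real.rpow_add_one ha0.ne' (p-1)]
            norm_num
    _ ≤ a ^ p + b ^ p := by
          have : 0 ≤ b ^ p := Real.rpow_nonneg hb p
          linarith

/-- Scaled Young inequality with explicit constant. -/
lemma young_scaled (p α₁ α₂ : ℝ) (hp : 2 ≤ p) (hα₁ : 0 < α₁) (hα₂ : 0 < α₂)
    (a b : ℝ) (ha : 0 ≤ a) (hb : 0 ≤ b) :
    α₂ * a ^ (p - 1) * b ≤ α₁ / 2 * a ^ p
      + (α₂ * (2 * α₂ / α₁) ^ (p - 1)) * b ^ p := by
  set μ : ℝ := 2 * α₂ / α₁ with hμdef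
  have hμ : 0 < μ := by positivity
  have key := young_aux p hp (a / μ) b (by positivity) hb
  have hμp : (0:ℝ) < μ ^ p := Real.rpow_pos_of_pos hμ p
  have h1 : a ^ (p - 1) = μ ^ (p - 1) * (a / μ) ^ (p - 1) := by
    rw [← Real.mul_rpow (le_of_lt hμ) (by positivity)]
    rw [mul_div_cancel₀ a (ne_of_gt hμ)]
  have h2 : (a / μ) ^ p = a ^ p / μ ^ p := Real.div_rpow ha (le_of_lt hμ) p
  have h3 : μ ^ (p - 1) = μ ^ p / μ := by
    rw [Real.rpow_sub hμ, Real.rpow_one]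
  have hc : 0 ≤ α₂ * μ ^ (p - 1) := by positivity
  have step : α₂ * a ^ (p - 1) * b ≤ α₂ * μ ^ (p-1) * ((a/μ) ^ p + b ^ p) := by
    rw [h1]
    calc α₂ * (μ ^ (p - 1) * (a / μ) ^ (p - 1)) * b
        = α₂ * μ ^ (p-1) * ((a/μ) ^ (p-1) * b) := by ring
    _ ≤ α₂ * μ ^ (p-1) * ((a/μ) ^ p + b ^ p) := mul_le_mul_of_nonneg_left key hc
  refine step.trans (le_of_eq ?_)
  have hαeq : α₂ * (μ ^ p / μ) * (a ^ p / μ ^ p) = α₁ / 2 * a ^ p := by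
    rw [hμdef]
    field_simp
  conv_lhs => rw [h2, h3]
  conv_rhs => rw [h3]
  rw [← hαeq]
  ring

/-- Integral estimate for the nonlinear term: there is `c > 0` depending only
on `α₁, α₂, p` such that for any `f` satisfying the dissipativity conditions and any
`u, z ∈ L²(ℝ^n) ∩ L^p(ℝ^n)` with `x ↦ f(x,u(x))·(u(x)−z(x))` integrable,
`∫ f(x,u(x))(u(x)−z(x)) dx ≤ −(α₁/2)‖u‖_p^p + ‖ψ₁‖_1 + ‖ψ₂‖_2²/2 + ‖z‖_2²/2 + c‖z‖_p^p`. -/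
theorem stmt1 (p α₁ α₂ : ℝ) (hp : 2 ≤ p) (hα₁ : 0 < α₁) (hα₂ : 0 < α₂) :
    ∃ c : ℝ, 0 < c ∧
      ∀ (n : ℕ) (q : ℝ) (f : EuclideanSpace ℝ (Fin n) → ℝ → ℝ)
        (ψ₁ ψ₂ u z : EuclideanSpace ℝ (Fin n) → ℝ),
        1 ≤ n →
        1 / p + 1 / q = 1 →
        Continuous (fun xs : EuclideanSpace ℝ (Fin n) × ℝ => f xs.1 xs.2) →
        MemLp ψ₁ 1 volume → MemLp ψ₁ ⊤ volume →
        MemLp ψ₂ 2 volume → MemLp ψ₂ (ENNReal.ofReal q) volume →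
        (∀ x, 0 ≤ ψ₂ x) →
        (∀ x s, f x s * s ≤ -α₁ * |s| ^ p + ψ₁ x) →
        (∀ x s, |f x s| ≤ α₂ * |s| ^ (p - 1) + ψ₂ x) →
        Measurable u → Measurable z →
        MemLp u 2 volume → MemLp u (ENNReal.ofReal p) volume →
        MemLp z 2 volume → MemLp z (ENNReal.ofReal p) volume →
        Integrable (fun x => f x (u x) * (u x - z x)) volume →
        (∫ x, f x (u x) * (u x - z x)) ≤
          -(α₁ / 2) * (∫ x, |u x| ^ p) + (∫ x, |ψ₁ x|)
            + (1 / 2) * (∫ x, (ψ₂ x) ^ 2) + (1 / 2) * (∫ x, (z x) ^ 2)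
            + c * (∫ x, |z x| ^ p) := by
  refine ⟨α₂ * (2 * α₂ / α₁) ^ (p - 1), by positivity, ?_⟩
  intro n q f ψ₁ ψ₂ u z hn hq hfc hψ₁1 hψ₁top hψ₂2 hψ₂q hψ₂pos hf1 hf2 hmu hmz
    hu2 hup hz2 hzp hint
  set c : ℝ := α₂ * (2 * α₂ / α₁) ^ (p - 1) with hc
  have hp0 : (0:ℝ) ≤ p := by linarith
  have hpne : ENNReal.ofReal p ≠ 0 := by
    simp [ENNReal.ofReal_eq_zero]; linarith
  have htoReal : (ENNReal.ofReal p).toReal = p := ENNReal.toReal_ofReal hp0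
  -- integrability of the pieces
  have hIup : Integrable (fun x => |u x| ^ p) volume := by
    have := hup.integrable_norm_rpow hpne ENNReal.ofReal_ne_top
    simpa [htoReal, Real.norm_eq_abs] using this
  have hIzp : Integrable (fun x => |z x| ^ p) volume := by
    have := hzp.integrable_norm_rpow hpne ENNReal.ofReal_ne_top
    simpa [htoReal, Real.norm_eq_abs] using this
  have hIψ₁ : Integrable ψ₁ volume := memLp_one_iff_integrable.mp hψ₁1
  have hIψ₂2 : Integrable (fun x => (ψ₂ x) ^ 2) volume := by
    have h := hψ₂2.integrable_norm_rpow (by norm_num) (by norm_num)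
    refine h.congr (Filter.Eventually.of_forall fun x => ?_)
    show ‖ψ₂ x‖ ^ (2:ENNReal).toReal = ψ₂ x ^ 2
    rw [show (2:ENNReal).toReal = ((2:ℕ):ℝ) by norm_num, Real.rpow_natCast,
      Real.norm_eq_abs, sq_abs]
  have hIz2 : Integrable (fun x => (z x) ^ 2) volume := by
    have h := hz2.integrable_norm_rpow (by norm_num) (by norm_num)
    refine h.congr (Filter.Eventually.of_forall fun x => ?_)
    show ‖z x‖ ^ (2:ENNReal).toReal = z x ^ 2
    rw [show (2:ENNReal).toReal = ((2:ℕ):ℝ) by norm_num, Real.rpow_natCast,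
      Real.norm_eq_abs, sq_abs]
  -- the dominating function
  set g : EuclideanSpace ℝ (Fin n) → ℝ := fun x =>
    -(α₁ / 2) * |u x| ^ p + ψ₁ x + (1/2) * (ψ₂ x) ^ 2 + (1/2) * (z x) ^ 2
      + c * |z x| ^ p with hg
  have hIg1 : Integrable (fun x => -(α₁ / 2) * |u x| ^ p) volume := hIup.const_mul _
  have hIg3 : Integrable (fun x => (1/2 : ℝ) * (ψ₂ x) ^ 2) volume := hIψ₂2.const_mul _
  have hIg4 : Integrable (fun x => (1/2 : ℝ) * (z x) ^ 2) volume := hIz2.const_mul _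
  have hIg5 : Integrable (fun x => c * |z x| ^ p) volume := hIzp.const_mul _
  have hI12 : Integrable (fun x => -(α₁ / 2) * |u x| ^ p + ψ₁ x) volume := hIg1.add hIψ₁
  have hI123 : Integrable
      (fun x => -(α₁ / 2) * |u x| ^ p + ψ₁ x + (1/2 : ℝ) * (ψ₂ x) ^ 2) volume :=
    hI12.add hIg3
  have hI1234 : Integrable
      (fun x => -(α₁ / 2) * |u x| ^ p + ψ₁ x + (1/2 : ℝ) * (ψ₂ x) ^ 2
        + (1/2 : ℝ) * (z x) ^ 2) volume := hI123.add hIg4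
  have hIg : Integrable g volume := hI1234.add hIg5
  -- pointwise estimate
  have hle : ∀ x, f x (u x) * (u x - z x) ≤ g x := by
    intro x
    set A := u x
    set B := z x
    set F := f x A
    have h1 : F * A ≤ -α₁ * |A| ^ p + ψ₁ x := hf1 x A
    have h2 : |F| ≤ α₂ * |A| ^ (p - 1) + ψ₂ x := hf2 x A
    have h3 : -(F * B) ≤ |F| * |B| := by
      calc -(F * B) ≤ |F * B| := neg_le_abs _
      _ = |F| * |B| := abs_mul F B
    have h4 : |F| * |B| ≤ (α₂ * |A| ^ (p - 1) + ψ₂ x) * |B| :=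
      mul_le_mul_of_nonneg_right h2 (abs_nonneg B)
    have hy : α₂ * |A| ^ (p - 1) * |B| ≤ α₁ / 2 * |A| ^ p + c * |B| ^ p :=
      young_scaled p α₁ α₂ hp hα₁ hα₂ |A| |B| (abs_nonneg A) (abs_nonneg B)
    have hamgm : ψ₂ x * |B| ≤ (1/2) * (ψ₂ x) ^ 2 + (1/2) * B ^ 2 := by
      nlinarith [sq_nonneg (ψ₂ x - |B|), sq_abs B]
    have hexp : F * (A - B) = F * A + -(F * B) := by ring
    have h4' : (α₂ * |A| ^ (p - 1) + ψ₂ x) * |B|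
        = α₂ * |A| ^ (p - 1) * |B| + ψ₂ x * |B| := by ring
    rw [hexp]
    simp only [hg]
    linarith [h3.trans (h4.trans_eq h4')]
  -- integrate
  have hmain : (∫ x, f x (u x) * (u x - z x)) ≤ ∫ x, g x :=
    integral_mono hint hIg hle
  have hsplit : (∫ x, g x)
      = -(α₁ / 2) * (∫ x, |u x| ^ p) + (∫ x, ψ₁ x)
        + (1 / 2) * (∫ x, (ψ₂ x) ^ 2) + (1 / 2) * (∫ x, (z x) ^ 2)
        + c * (∫ x, |z x| ^ p) := by
    simp only [hg]
    rw [integral_add hI1234 hIg5,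
        integral_add hI123 hIg4,
        integral_add hI12 hIg3,
        integral_add hIg1 hIψ₁,
        integral_const_mul, integral_const_mul, integral_const_mul, integral_const_mul]
  have hψ₁abs : (∫ x, ψ₁ x) ≤ ∫ x, |ψ₁ x| :=
    integral_mono hIψ₁ hIψ₁.abs (fun x => le_abs_self _)
  rw [hsplit] at hmain
  linarith
end

section
/- Let f satisfy the dissipativity conditions, and let c₄, c₅ be the constants from the energy differential inequality (depending only on λ, α, δ, β, α₁, α₂, p, ‖g‖_{L²}, ‖h‖_{L²}, ‖ψ₁‖_{L¹}, ‖ψ₂‖_{L²}). Then every regular solution (ũ, ṽ) of the transformed FitzHugh–Nagumo system satisfies, for all 0 ≤ T₁ ≤ t: β‖ũ(t)‖_{L²}² + α‖ṽ(t)‖_{L²}² + ∫_{T₁}^t e^{η(s−t)}(β‖∇ũ(s)‖_{L²}² + α₁‖u(s)‖_{L^p}^p) ds ≤ e^{η(T₁−t)}(β‖ũ(T₁)‖_{L²}² + α‖ṽ(T₁)‖_{L²}²) + ∫_{T₁}^t e^{η(s−t)}(c₄·P(s) + c₅) ds. -/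
open MeasureTheory Set
noncomputable section

/-- The Laplacian of a function on `ℝ^n`, as the sum of its second partial derivatives. -/
def lap {n : ℕ} (u : EuclideanSpace ℝ (Fin n) → ℝ) (x : EuclideanSpace ℝ (Fin n)) : ℝ :=
  ∑ i : Fin n, fderiv ℝ (fun y => fderiv ℝ u y (EuclideanSpace.single i 1)) x
    (EuclideanSpace.single i 1)

/-- A regular solution of the transformed FitzHugh–Nagumo system
`dũ/dt = −λũ + Δũ − αṽ + f(·, ũ + Z₁) + g + ΔZ₁ − αZ₂`,
`dṽ/dt = −δṽ + βũ + h + βZ₁` on `[0,∞)`: the curves `t ↦ ũ(t), ṽ(t)` are continuously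
differentiable in `L²(ℝ^n)` (the curves `U, V` with derivatives `U', V'`), with pointwise
representatives `ut, vt` enjoying the stated space regularity and memberships, the stated
norm maps are continuous, and the equations hold in `L²(ℝ^n)` for every `t ≥ 0`. -/
structure RegularSolution (n : ℕ) (p lam α δ β : ℝ)
    (f : EuclideanSpace ℝ (Fin n) → ℝ → ℝ) (g h : EuclideanSpace ℝ (Fin n) → ℝ)
    (Z₁ Z₂ : ℝ → EuclideanSpace ℝ (Fin n) → ℝ) : Type where
  ut : ℝ → EuclideanSpace ℝ (Fin n) → ℝ
  vt : ℝ → EuclideanSpace ℝ (Fin n) → ℝ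
  U : ℝ → Lp ℝ 2 (volume : Measure (EuclideanSpace ℝ (Fin n)))
  V : ℝ → Lp ℝ 2 (volume : Measure (EuclideanSpace ℝ (Fin n)))
  U' : ℝ → Lp ℝ 2 (volume : Measure (EuclideanSpace ℝ (Fin n)))
  V' : ℝ → Lp ℝ 2 (volume : Measure (EuclideanSpace ℝ (Fin n)))
  hU : ∀ t, ⇑(U t) =ᵐ[volume] ut t
  hV : ∀ t, ⇑(V t) =ᵐ[volume] vt t
  hU' : ∀ t ≥ 0, HasDerivWithinAt U (U' t) (Ici 0) t
  hV' : ∀ t ≥ 0, HasDerivWithinAt V (V' t) (Ici 0) t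
  contU' : ContinuousOn U' (Ici 0)
  contV' : ContinuousOn V' (Ici 0)
  smooth_ut : ∀ t ≥ 0, ContDiff ℝ 2 (ut t)
  smooth_Z₁ : ∀ t ≥ 0, ContDiff ℝ 2 (Z₁ t)
  mem_ut : ∀ t ≥ 0, MemLp (ut t) 2 volume
  mem_grad_ut : ∀ t ≥ 0, MemLp (fun x => gradient (ut t) x) 2 volume
  mem_lap_ut : ∀ t ≥ 0, MemLp (lap (ut t)) 2 volume
  mem_Z₁ : ∀ t ≥ 0, MemLp (Z₁ t) 2 volume
  mem_grad_Z₁ : ∀ t ≥ 0, MemLp (fun x => gradient (Z₁ t) x) 2 volume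
  mem_lap_Z₁ : ∀ t ≥ 0, MemLp (lap (Z₁ t)) 2 volume
  mem_ut_p : ∀ t ≥ 0, MemLp (ut t) (ENNReal.ofReal p) volume
  mem_u_p : ∀ t ≥ 0, MemLp (fun x => ut t x + Z₁ t x) (ENNReal.ofReal p) volume
  mem_Z₁_p : ∀ t ≥ 0, MemLp (Z₁ t) (ENNReal.ofReal p) volume
  mem_Z₂ : ∀ t ≥ 0, MemLp (Z₂ t) 2 volume
  mem_f : ∀ t ≥ 0, MemLp (fun x => f x (ut t x + Z₁ t x)) 2 volume
  cont_grad_ut : ContinuousOn (fun t => ∫ x, ‖gradient (ut t) x‖ ^ 2) (Ici 0)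
  cont_u_p : ContinuousOn (fun t => ∫ x, |ut t x + Z₁ t x| ^ p) (Ici 0)
  cont_Z₁_p : ContinuousOn (fun t => ∫ x, |Z₁ t x| ^ p) (Ici 0)
  cont_Z₁ : ContinuousOn (fun t => ∫ x, (Z₁ t x) ^ 2) (Ici 0)
  cont_grad_Z₁ : ContinuousOn (fun t => ∫ x, ‖gradient (Z₁ t) x‖ ^ 2) (Ici 0)
  cont_lap_Z₁ : ContinuousOn (fun t => ∫ x, (lap (Z₁ t) x) ^ 2) (Ici 0)
  cont_Z₂ : ContinuousOn (fun t => ∫ x, (Z₂ t x) ^ 2) (Ici 0)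
  equ : ∀ t ≥ 0, ⇑(U' t) =ᵐ[volume] fun x =>
    -lam * ut t x + lap (ut t) x - α * vt t x + f x (ut t x + Z₁ t x) + g x
      + lap (Z₁ t) x - α * Z₂ t x
  eqv : ∀ t ≥ 0, ⇑(V' t) =ᵐ[volume] fun x =>
    -δ * vt t x + β * ut t x + h x + β * Z₁ t x


lemma gronwall_aux (η : ℝ) (E G R : ℝ → ℝ)
    (hEcont : ContinuousOn E (Ici 0))
    (hGcont : ContinuousOn G (Ici 0)) (hRcont : ContinuousOn R (Ici 0))
    (hkey : ∀ s : ℝ, 0 < s → ∃ E', HasDerivAt E E' s ∧ η * E s + E' + G s - R s ≤ 0)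
    (T₁ t : ℝ) (hT₁ : 0 ≤ T₁) (hTt : T₁ ≤ t) :
    E t + (∫ s in T₁..t, Real.exp (η * (s - t)) * G s)
      ≤ Real.exp (η * (T₁ - t)) * E T₁
        + ∫ s in T₁..t, Real.exp (η * (s - t)) * R s := by
  have hexp : Continuous fun s : ℝ => Real.exp (η * s) :=
    Real.continuous_exp.comp (continuous_const.mul continuous_id)
  set φ : ℝ → ℝ := fun s => Real.exp (η * s) * (G s - R s) with hφdef
  have hφcont : ContinuousOn φ (Ici 0) := hexp.continuousOn.mul (hGcont.sub hRcont)
  have hsub : Icc T₁ t ⊆ Ici 0 := fun s hs => le_trans hT₁ hs.1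
  have huIcc : uIcc T₁ t = Icc T₁ t := uIcc_of_le hTt
  set F : ℝ → ℝ := fun s => Real.exp (η * s) * E s + ∫ r in T₁..s, φ r with hFdef
  have hφint : IntegrableOn φ (uIcc T₁ t) volume := by
    rw [huIcc]
    exact (hφcont.mono hsub).integrableOn_compact isCompact_Icc
  have hFcont : ContinuousOn F (Icc T₁ t) := by
    apply ContinuousOn.add
    · exact (hexp.continuousOn.mul hEcont).mono hsub
    · exact (intervalIntegral.continuousOn_primitive_interval hφint).mono
        (by rw [huIcc])
  have key : ∀ s ∈ Ioo T₁ t, ∃ F', HasDerivAt F F' s ∧ F' ≤ 0 := by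
    intro s hs
    have hspos : 0 < s := lt_of_le_of_lt hT₁ hs.1
    obtain ⟨E's, hdE, hle⟩ := hkey s hspos
    have hdexp : HasDerivAt (fun r : ℝ => Real.exp (η * r)) (Real.exp (η * s) * η) s := by
      simpa using ((hasDerivAt_id' s).const_mul η).exp
    have hdint : HasDerivAt (fun r => ∫ x in T₁..r, φ x) (φ s) s := by
      apply intervalIntegral.integral_hasDerivAt_right
      · apply ContinuousOn.intervalIntegrable
        apply hφcont.mono
        rw [uIcc_of_le hs.1.le]
        exact fun r hr => le_trans hT₁ hr.1
      · exact ContinuousOn.stronglyMeasurableAtFilter isOpen_Ioi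
          (hφcont.mono Ioi_subset_Ici_self) s hspos
      · exact (hφcont s hspos.le).continuousAt (Ici_mem_nhds hspos)
    refine ⟨Real.exp (η * s) * η * E s + Real.exp (η * s) * E's + φ s, ?_, ?_⟩
    · exact ((hdexp.mul hdE).add hdint)
    · have hepos : (0 : ℝ) < Real.exp (η * s) := Real.exp_pos _
      have : Real.exp (η * s) * η * E s + Real.exp (η * s) * E's + φ s
          = Real.exp (η * s) * (η * E s + E's + G s - R s) := by
        simp only [hφdef]; ring
      rw [this]
      exact mul_nonpos_of_nonneg_of_nonpos hepos.le hle
  have hanti : AntitoneOn F (Icc T₁ t) := by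
    apply antitoneOn_of_deriv_nonpos (convex_Icc T₁ t) hFcont
    · intro s hs
      rw [interior_Icc] at hs
      obtain ⟨F', hd, _⟩ := key s hs
      exact hd.differentiableAt.differentiableWithinAt
    · intro s hs
      rw [interior_Icc] at hs
      obtain ⟨F', hd, hle⟩ := key s hs
      rw [hd.deriv]; exact hle
  have hFt : F t ≤ F T₁ :=
    hanti (left_mem_Icc.mpr hTt) (right_mem_Icc.mpr hTt) hTt
  have hFT₁ : F T₁ = Real.exp (η * T₁) * E T₁ := by
    simp [hFdef, intervalIntegral.integral_same]
  rw [hFT₁] at hFt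
  simp only [hFdef] at hFt
  -- hFt : exp(η t) * E t + ∫ φ ≤ exp(η T₁) * E T₁
  have hIG : IntervalIntegrable (fun s => Real.exp (η * (s - t)) * G s) volume T₁ t := by
    apply ContinuousOn.intervalIntegrable
    apply ContinuousOn.mul
    · exact (Real.continuous_exp.comp (continuous_const.mul
        (continuous_id.sub continuous_const))).continuousOn
    · exact hGcont.mono (huIcc ▸ hsub)
  have hIR : IntervalIntegrable (fun s => Real.exp (η * (s - t)) * R s) volume T₁ t := by
    apply ContinuousOn.intervalIntegrable
    apply ContinuousOn.mul
    · exact (Real.continuous_exp.comp (continuous_const.mul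
        (continuous_id.sub continuous_const))).continuousOn
    · exact hRcont.mono (huIcc ▸ hsub)
  have hsplit : (∫ s in T₁..t, Real.exp (η * (s - t)) * (G s - R s))
      = (∫ s in T₁..t, Real.exp (η * (s - t)) * G s)
        - ∫ s in T₁..t, Real.exp (η * (s - t)) * R s := by
    rw [← intervalIntegral.integral_sub hIG hIR]
    apply intervalIntegral.integral_congr
    intro s _
    ring
  have hscale : (∫ s in T₁..t, Real.exp (η * (s - t)) * (G s - R s))
      = Real.exp (-(η * t)) * ∫ s in T₁..t, φ s := by
    rw [← intervalIntegral.integral_const_mul]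
    apply intervalIntegral.integral_congr
    intro s _
    simp only [hφdef]
    rw [← mul_assoc, ← Real.exp_add]
    congr 2
    ring
  have e1 : Real.exp (-(η * t)) * Real.exp (η * t) = 1 := by
    rw [← Real.exp_add]; simp
  have e2 : Real.exp (-(η * t)) * Real.exp (η * T₁) = Real.exp (η * (T₁ - t)) := by
    rw [← Real.exp_add]; congr 1; ring
  have hmul := mul_le_mul_of_nonneg_left hFt (Real.exp_pos (-(η * t))).le
  have h2 : E t + Real.exp (-(η * t)) * ∫ s in T₁..t, φ s
      ≤ Real.exp (η * (T₁ - t)) * E T₁ := by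
    calc E t + Real.exp (-(η * t)) * ∫ s in T₁..t, φ s
        = Real.exp (-(η * t)) * (Real.exp (η * t) * E t + ∫ s in T₁..t, φ s) := by
          rw [mul_add, ← mul_assoc, e1, one_mul]
      _ ≤ Real.exp (-(η * t)) * (Real.exp (η * T₁) * E T₁) := hmul
      _ = Real.exp (η * (T₁ - t)) * E T₁ := by rw [← mul_assoc, e2]
  rw [← hscale, hsplit] at h2
  linarith

/-- Integrated energy inequality: if `c₄, c₅ > 0` are constants for which
the energy differential inequality holds along a regular solution `(ũ, ṽ)` of the
transformed FitzHugh–Nagumo system, then for all `0 ≤ T₁ ≤ t`, with `η = min(λ,δ)`,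
`β‖ũ(t)‖₂² + α‖ṽ(t)‖₂² + ∫_{T₁}^t e^{η(s−t)}(β‖∇ũ(s)‖₂² + α₁‖u(s)‖_p^p) ds
  ≤ e^{η(T₁−t)}(β‖ũ(T₁)‖₂² + α‖ṽ(T₁)‖₂²) + ∫_{T₁}^t e^{η(s−t)}(c₄ P(s) + c₅) ds`. -/
theorem stmt6 (n : ℕ) (p q lam α δ β α₁ α₂ η : ℝ) (hn : 1 ≤ n)
    (hp : 2 ≤ p) (hpq : 1 / p + 1 / q = 1)
    (hlam : 0 < lam) (hα : 0 < α) (hδ : 0 < δ) (hβ : 0 < β)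
    (hα₁ : 0 < α₁) (hα₂ : 0 < α₂) (hη : η = min lam δ)
    (g h ψ₁ ψ₂ : EuclideanSpace ℝ (Fin n) → ℝ)
    (hg : MemLp g 2 volume) (hh : MemLp h 2 volume)
    (hψ₁_1 : MemLp ψ₁ 1 volume) (hψ₁_inf : MemLp ψ₁ ⊤ volume)
    (hψ₂_2 : MemLp ψ₂ 2 volume) (hψ₂_q : MemLp ψ₂ (ENNReal.ofReal q) volume)
    (hψ₂_nonneg : ∀ x, 0 ≤ ψ₂ x)
    (f : EuclideanSpace ℝ (Fin n) → ℝ → ℝ)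
    (hf_cont : Continuous (fun xs : EuclideanSpace ℝ (Fin n) × ℝ => f xs.1 xs.2))
    (hf_diss : ∀ x s, f x s * s ≤ -α₁ * |s| ^ p + ψ₁ x)
    (hf_growth : ∀ x s, |f x s| ≤ α₂ * |s| ^ (p - 1) + ψ₂ x)
    (Z₁ Z₂ : ℝ → EuclideanSpace ℝ (Fin n) → ℝ)
    (sol : RegularSolution n p lam α δ β f g h Z₁ Z₂)
    (c₄ c₅ : ℝ) (hc₄ : 0 < c₄) (hc₅ : 0 < c₅)
    (hineq : ∀ t ≥ (0 : ℝ), ∃ E' : ℝ,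
      HasDerivWithinAt
        (fun s => β * (∫ x, (sol.ut s x) ^ 2) + α * (∫ x, (sol.vt s x) ^ 2))
        E' (Ici 0) t ∧
      E' + lam * β * (∫ x, (sol.ut t x) ^ 2) + α * δ * (∫ x, (sol.vt t x) ^ 2)
          + β * (∫ x, ‖gradient (sol.ut t) x‖ ^ 2)
          + α₁ * (∫ x, |sol.ut t x + Z₁ t x| ^ p)
        ≤ c₄ * ((∫ x, |Z₁ t x| ^ p) + (∫ x, (Z₁ t x) ^ 2)
            + (∫ x, ‖gradient (Z₁ t) x‖ ^ 2) + (∫ x, (Z₂ t x) ^ 2)) + c₅) :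
    ∀ T₁ t : ℝ, 0 ≤ T₁ → T₁ ≤ t →
      β * (∫ x, (sol.ut t x) ^ 2) + α * (∫ x, (sol.vt t x) ^ 2)
          + (∫ s in T₁..t, Real.exp (η * (s - t)) *
              (β * (∫ x, ‖gradient (sol.ut s) x‖ ^ 2)
                + α₁ * (∫ x, |sol.ut s x + Z₁ s x| ^ p)))
        ≤ Real.exp (η * (T₁ - t)) *
            (β * (∫ x, (sol.ut T₁ x) ^ 2) + α * (∫ x, (sol.vt T₁ x) ^ 2))
          + ∫ s in T₁..t, Real.exp (η * (s - t)) *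
              (c₄ * ((∫ x, |Z₁ s x| ^ p) + (∫ x, (Z₁ s x) ^ 2)
                + (∫ x, ‖gradient (Z₁ s) x‖ ^ 2) + (∫ x, (Z₂ s x) ^ 2)) + c₅) := by
  intro T₁ t hT₁ hTt
  refine gronwall_aux η
    (fun s => β * (∫ x, (sol.ut s x) ^ 2) + α * (∫ x, (sol.vt s x) ^ 2))
    (fun s => β * (∫ x, ‖gradient (sol.ut s) x‖ ^ 2)
      + α₁ * (∫ x, |sol.ut s x + Z₁ s x| ^ p))
    (fun s => c₄ * ((∫ x, |Z₁ s x| ^ p) + (∫ x, (Z₁ s x) ^ 2)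
        + (∫ x, ‖gradient (Z₁ s) x‖ ^ 2) + (∫ x, (Z₂ s x) ^ 2)) + c₅)
    ?_ ?_ ?_ ?_ T₁ t hT₁ hTt
  · exact fun s hs => ((hineq s hs).choose_spec.1).continuousWithinAt
  · exact (continuousOn_const.mul sol.cont_grad_ut).add
      (continuousOn_const.mul sol.cont_u_p)
  · exact (continuousOn_const.mul
      (((sol.cont_Z₁_p.add sol.cont_Z₁).add sol.cont_grad_Z₁).add sol.cont_Z₂)).add
      continuousOn_const
  · intro s hs
    obtain ⟨E', hd, hle⟩ := hineq s hs.le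
    refine ⟨E', hd.hasDerivAt (Ici_mem_nhds hs), ?_⟩
    have hA : (0:ℝ) ≤ ∫ x, (sol.ut s x) ^ 2 := integral_nonneg fun x => sq_nonneg _
    have hB : (0:ℝ) ≤ ∫ x, (sol.vt s x) ^ 2 := integral_nonneg fun x => sq_nonneg _
    have hηl : η ≤ lam := by rw [hη]; exact min_le_left _ _
    have hηd : η ≤ δ := by rw [hη]; exact min_le_right _ _
    beta_reduce
    nlinarith [mul_le_mul_of_nonneg_right
        (mul_le_mul_of_nonneg_right hηl hβ.le) hA,
      mul_le_mul_of_nonneg_right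
        (mul_le_mul_of_nonneg_right hηd hα.le) hB]
end
end

section
/- Let ρ : [0,∞) → [0,1] be C¹ with ρ(s) = 0 for s ≤ 1, ρ(s) = 1 for s ≥ 2, and |ρ′(s)| ≤ c₀ for all s ≥ 0, and for k > 0 set ρ_k(x) = ρ(|x|²/k²). Then for every k > 0 and every u ∈ C²(ℝ^n) with u, ∇u, Δu ∈ L²(ℝ^n): −∫_{ℝ^n} ρ_k(x)·u(x)·Δu(x) dx ≥ ∫_{ℝ^n} ρ_k(x)·|∇u(x)|² dx − (2√2·c₀/k)·(‖u‖_{L²}² + ‖∇u‖_{L²}²). -/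
open MeasureTheory Set
noncomputable section

section AuxStmt10

open RealInnerProductSpace
open scoped ENNReal

/-- Derivative of the cutoff `x ↦ ρ(‖x‖²/m²)`. -/
def Dcut {n : ℕ} (ρ : ℝ → ℝ) (m : ℝ) (x : EuclideanSpace ℝ (Fin n)) :
    EuclideanSpace ℝ (Fin n) →L[ℝ] ℝ :=
  (deriv ρ (‖x‖ ^ 2 / m ^ 2) * (2 / m ^ 2)) • (innerSL ℝ x)

lemma stmt10_hasFDerivAt_normsq_div {n : ℕ} (m : ℝ) (x : EuclideanSpace ℝ (Fin n)) :
    HasFDerivAt (fun y : EuclideanSpace ℝ (Fin n) => ‖y‖ ^ 2 / m ^ 2)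
      ((2 / m ^ 2) • innerSL ℝ x) x := by
  have h0 : HasFDerivAt (fun y : EuclideanSpace ℝ (Fin n) => (⟪y, y⟫ : ℝ))
      ((fderivInnerCLM ℝ (x, x)).comp ((ContinuousLinearMap.id ℝ _).prod
        (ContinuousLinearMap.id ℝ _))) x :=
    (hasFDerivAt_id x).inner ℝ (hasFDerivAt_id x)
  have h1 := h0.const_mul ((m ^ 2)⁻¹)
  have hfun : (fun y : EuclideanSpace ℝ (Fin n) => (m ^ 2)⁻¹ * (⟪y, y⟫ : ℝ))
      = fun y : EuclideanSpace ℝ (Fin n) => ‖y‖ ^ 2 / m ^ 2 := by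
    funext y; rw [real_inner_self_eq_norm_sq, div_eq_inv_mul]
  rw [hfun] at h1
  refine h1.congr_fderiv ?_
  ext v
  simp only [ContinuousLinearMap.smul_apply, ContinuousLinearMap.coe_comp',
    Function.comp_apply, ContinuousLinearMap.prod_apply,
    ContinuousLinearMap.coe_id', id_eq, fderivInnerCLM_apply, innerSL_apply_apply,
    smul_eq_mul]
  rw [real_inner_comm x v]
  ring

lemma stmt10_hasFDerivAt_cut {n : ℕ} {ρ : ℝ → ℝ} (hρ : ContDiff ℝ 1 ρ) (m : ℝ)
    (x : EuclideanSpace ℝ (Fin n)) :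
    HasFDerivAt (fun y : EuclideanSpace ℝ (Fin n) => ρ (‖y‖ ^ 2 / m ^ 2)) (Dcut ρ m x) x := by
  have h := (hρ.differentiable one_ne_zero (‖x‖ ^ 2 / m ^ 2)).hasDerivAt
  have h2 := h.comp_hasFDerivAt x (stmt10_hasFDerivAt_normsq_div m x)
  refine h2.congr_fderiv ?_
  rw [Dcut, smul_smul]

lemma stmt10_deriv_rho_zero_gt {ρ : ℝ → ℝ} (hρ_one : ∀ s : ℝ, 2 ≤ s → ρ s = 1)
    {s : ℝ} (hs : 2 < s) : deriv ρ s = 0 := by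
  have h : ρ =ᶠ[nhds s] fun _ => (1:ℝ) := by
    filter_upwards [Ioi_mem_nhds hs] with t ht
    exact hρ_one t (le_of_lt ht)
  rw [h.deriv_eq, deriv_const]

set_option maxHeartbeats 1000000 in
set_option synthInstance.maxHeartbeats 400000 in
lemma stmt10_norm_Dcut_le {n : ℕ} {ρ : ℝ → ℝ} {c₀ : ℝ} (hc₀ : 0 < c₀)
    (hρ_one : ∀ s : ℝ, 2 ≤ s → ρ s = 1)
    (hρ' : ∀ s : ℝ, 0 ≤ s → |deriv ρ s| ≤ c₀)
    {m : ℝ} (hm : 0 ≤ m) (x : EuclideanSpace ℝ (Fin n)) :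
    ‖Dcut ρ m x‖ ≤ 2 * Real.sqrt 2 * c₀ / m := by
  rw [Dcut]
  rcases eq_or_lt_of_le hm with rfl | hm
  · simp
  by_cases hx : ‖x‖ ^ 2 / m ^ 2 ≤ 2
  · have hnorm : ‖x‖ ≤ Real.sqrt 2 * m := by
      have h1 : ‖x‖ ^ 2 ≤ 2 * m ^ 2 := by
        rw [div_le_iff₀ (by positivity)] at hx; linarith
      calc ‖x‖ = Real.sqrt (‖x‖ ^ 2) := (Real.sqrt_sq (norm_nonneg x)).symm
        _ ≤ Real.sqrt (2 * m ^ 2) := Real.sqrt_le_sqrt h1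
        _ = Real.sqrt 2 * m := by
            rw [Real.sqrt_mul (by norm_num), Real.sqrt_sq hm.le]
    calc ‖(deriv ρ (‖x‖ ^ 2 / m ^ 2) * (2 / m ^ 2)) • (innerSL ℝ x)‖
        ≤ |deriv ρ (‖x‖ ^ 2 / m ^ 2)| * (2 / m ^ 2) * ‖x‖ := by
          refine (norm_smul_le (deriv ρ (‖x‖ ^ 2 / m ^ 2) * (2 / m ^ 2))
            (innerSL ℝ x)).trans (le_of_eq ?_)
          rw [innerSL_apply_norm, Real.norm_eq_abs, abs_mul]
          congr 2
          rw [abs_of_nonneg (by positivity)]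
      _ ≤ c₀ * (2 / m ^ 2) * (Real.sqrt 2 * m) := by
          apply mul_le_mul
          · exact mul_le_mul_of_nonneg_right (hρ' _ (by positivity)) (by positivity)
          · exact hnorm
          · exact norm_nonneg x
          · positivity
      _ = 2 * Real.sqrt 2 * c₀ / m := by
          field_simp
  · have h2 : deriv ρ (‖x‖ ^ 2 / m ^ 2) = 0 :=
      stmt10_deriv_rho_zero_gt hρ_one (not_le.mp hx)
    rw [h2]
    simp
    positivity

lemma stmt10_sum_single_smul {n : ℕ} (y : EuclideanSpace ℝ (Fin n)) :
    ∑ i, y i • (EuclideanSpace.single i (1:ℝ)) = y := by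
  ext j
  have h : (∑ i, y i • (EuclideanSpace.single i (1:ℝ))) j
      = ∑ i, (y i • (EuclideanSpace.single i (1:ℝ))) j :=
    by rw [WithLp.ofLp_sum, Finset.sum_apply]
  rw [h]
  simp [EuclideanSpace.single_apply, Finset.sum_ite_eq']

lemma stmt10_fderiv_eq_inner_gradient {n : ℕ} (u : EuclideanSpace ℝ (Fin n) → ℝ)
    (x v : EuclideanSpace ℝ (Fin n)) :
    fderiv ℝ u x v = ⟪gradient u x, v⟫ := by
  rw [gradient, InnerProductSpace.toDual_symm_apply]

lemma stmt10_fderiv_single {n : ℕ} (u : EuclideanSpace ℝ (Fin n) → ℝ)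
    (x : EuclideanSpace ℝ (Fin n)) (i : Fin n) :
    fderiv ℝ u x (EuclideanSpace.single i (1:ℝ)) = gradient u x i := by
  rw [stmt10_fderiv_eq_inner_gradient, EuclideanSpace.inner_single_right]
  simp

lemma stmt10_clm_sum {n : ℕ} (L : EuclideanSpace ℝ (Fin n) →L[ℝ] ℝ)
    (y : EuclideanSpace ℝ (Fin n)) :
    ∑ i, L (EuclideanSpace.single i (1:ℝ)) * y i = L y := by
  conv_rhs => rw [← stmt10_sum_single_smul y]
  rw [map_sum]
  refine Finset.sum_congr rfl fun i _ => ?_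
  rw [ContinuousLinearMap.map_smul, smul_eq_mul, mul_comm]

lemma stmt10_sum_clm_mul_fderiv {n : ℕ} (L : EuclideanSpace ℝ (Fin n) →L[ℝ] ℝ)
    (u : EuclideanSpace ℝ (Fin n) → ℝ) (x : EuclideanSpace ℝ (Fin n)) :
    ∑ i, L (EuclideanSpace.single i (1:ℝ)) * fderiv ℝ u x (EuclideanSpace.single i (1:ℝ))
      = L (gradient u x) := by
  rw [← stmt10_clm_sum L (gradient u x)]
  refine Finset.sum_congr rfl fun i _ => ?_
  rw [stmt10_fderiv_single]

lemma stmt10_norm_grad_sq {n : ℕ} (u : EuclideanSpace ℝ (Fin n) → ℝ)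
    (x : EuclideanSpace ℝ (Fin n)) :
    fderiv ℝ u x (gradient u x) = ‖gradient u x‖ ^ 2 := by
  rw [stmt10_fderiv_eq_inner_gradient, real_inner_self_eq_norm_sq]

lemma stmt10_integrable_mul_L2 {α : Type*} [MeasurableSpace α] {μ : Measure α}
    {f g : α → ℝ} (hf : MemLp f 2 μ) (hg : MemLp g 2 μ) :
    Integrable (fun x => f x * g x) μ := by
  have hpqr : (1:ℝ≥0∞)/1 = 1/2 + 1/2 := by
    rw [one_div_one, one_div, ENNReal.inv_two_add_inv_two]
  have h : MemLp (f • g) 1 μ := hg.smul hf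
  rw [memLp_one_iff_integrable] at h
  exact h

end AuxStmt10

set_option maxHeartbeats 2000000 in
/-- Cut-off integration-by-parts estimate: for the cut-off family
`ρ_k(x) = ρ(|x|²/k²)` (where `ρ : [0,∞) → [0,1]` is `C¹`, vanishes on `[0,1]`, equals `1` on
`[2,∞)` and `|ρ′| ≤ c₀`), every `u ∈ C²` with `u, ∇u, Δu ∈ L²(ℝ^n)` satisfies
`−∫ ρ_k u Δu ≥ ∫ ρ_k |∇u|² − (2√2 c₀ / k)(‖u‖₂² + ‖∇u‖₂²)`. -/
theorem stmt10 (n : ℕ) (c₀ : ℝ) (hc₀ : 0 < c₀) (ρ : ℝ → ℝ)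
    (hρ_C1 : ContDiff ℝ 1 ρ)
    (hρ_range : ∀ s : ℝ, 0 ≤ s → 0 ≤ ρ s ∧ ρ s ≤ 1)
    (hρ_zero : ∀ s : ℝ, s ≤ 1 → ρ s = 0)
    (hρ_one : ∀ s : ℝ, 2 ≤ s → ρ s = 1)
    (hρ' : ∀ s : ℝ, 0 ≤ s → |deriv ρ s| ≤ c₀) :
    ∀ (k : ℝ), 0 < k →
      ∀ u : EuclideanSpace ℝ (Fin n) → ℝ,
        ContDiff ℝ 2 u →
        MemLp u 2 volume →
        MemLp (fun x => gradient u x) 2 volume →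
        MemLp (lap u) 2 volume →
        -(∫ x, ρ (‖x‖ ^ 2 / k ^ 2) * (u x * lap u x)) ≥
          (∫ x, ρ (‖x‖ ^ 2 / k ^ 2) * ‖gradient u x‖ ^ 2)
            - (2 * Real.sqrt 2 * c₀ / k) * ((∫ x, (u x) ^ 2) + (∫ x, ‖gradient u x‖ ^ 2)) := by
  intro k hk u hu hu2 hgrad2 hlap2
  have hsqrt2 : (0:ℝ) < Real.sqrt 2 := by positivity
  set K : ℝ := 2 * Real.sqrt 2 * c₀ with hKdef
  have hKpos : 0 < K := by positivity
  -- continuity facts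
  have hρc : Continuous ρ := hρ_C1.continuous
  have hψc : ∀ m : ℝ, Continuous (fun x : EuclideanSpace ℝ (Fin n) => ρ (‖x‖ ^ 2 / m ^ 2)) :=
    fun m => hρc.comp ((continuous_norm.pow 2).div_const _)
  have hucont : Continuous u := hu.continuous
  have hfdu_cont : Continuous (fderiv ℝ u) := hu.continuous_fderiv (by norm_num)
  have hgradcont : Continuous (fun x => gradient u x) := by
    have h : (fun x => gradient u x)
        = fun x => (InnerProductSpace.toDual ℝ (EuclideanSpace ℝ (Fin n))).symm
            (fderiv ℝ u x) := rfl
    rw [h]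
    exact (LinearIsometryEquiv.continuous _).comp hfdu_cont
  have hgi1 : ∀ i : Fin n, ContDiff ℝ 1
      (fun x => fderiv ℝ u x (EuclideanSpace.single i (1:ℝ))) :=
    fun i => (hu.fderiv_right (by norm_num)).clm_apply contDiff_const
  have hdgic : ∀ i : Fin n, Continuous (fun x =>
      fderiv ℝ (fun y => fderiv ℝ u y (EuclideanSpace.single i (1:ℝ))) x
        (EuclideanSpace.single i (1:ℝ))) :=
    fun i => ((hgi1 i).continuous_fderiv one_ne_zero).clm_apply continuous_const
  have hlapc : Continuous (lap u) := by
    have h : lap u = fun x => ∑ i : Fin n,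
        fderiv ℝ (fun y => fderiv ℝ u y (EuclideanSpace.single i 1)) x
          (EuclideanSpace.single i 1) := rfl
    rw [h]
    exact continuous_finset_sum _ fun i _ => hdgic i
  have hderivρc : Continuous (deriv ρ) := hρ_C1.continuous_deriv le_rfl
  have hDcutc : ∀ m : ℝ, Continuous (fun x : EuclideanSpace ℝ (Fin n) => Dcut ρ m x) := by
    intro m
    have h : (fun x : EuclideanSpace ℝ (Fin n) => Dcut ρ m x)
        = fun x => (deriv ρ (‖x‖ ^ 2 / m ^ 2) * (2 / m ^ 2)) • (innerSL ℝ x) := rfl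
    rw [h]
    exact (((hderivρc.comp ((continuous_norm.pow 2).div_const _)).mul
      continuous_const)).smul (map_continuous (innerSL ℝ))
  have hDgradc : ∀ m : ℝ, Continuous (fun x => Dcut ρ m x (gradient u x)) :=
    fun m => (hDcutc m).clm_apply hgradcont
  -- basic bounds
  have hψ01 : ∀ (m : ℝ) (x : EuclideanSpace ℝ (Fin n)),
      0 ≤ ρ (‖x‖ ^ 2 / m ^ 2) ∧ ρ (‖x‖ ^ 2 / m ^ 2) ≤ 1 :=
    fun m x => hρ_range _ (by positivity)
  have hDk : ∀ x : EuclideanSpace ℝ (Fin n), ‖Dcut ρ k x‖ ≤ K / k :=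
    fun x => stmt10_norm_Dcut_le hc₀ hρ_one hρ' hk.le x
  have hDnat : ∀ (j : ℕ) (x : EuclideanSpace ℝ (Fin n)), ‖Dcut ρ (j:ℝ) x‖ ≤ K / j :=
    fun j x => stmt10_norm_Dcut_le hc₀ hρ_one hρ' (Nat.cast_nonneg j) x
  have hψzero : ∀ (m : ℝ), 0 < m → ∀ x : EuclideanSpace ℝ (Fin n),
      ‖x‖ ≤ m → ρ (‖x‖ ^ 2 / m ^ 2) = 0 := by
    intro m hm x hx
    apply hρ_zero
    rw [div_le_one (by positivity)]
    exact pow_le_pow_left₀ (norm_nonneg x) hx 2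
  have hq_gt : ∀ (m : ℝ), 0 < m → ∀ x : EuclideanSpace ℝ (Fin n),
      Real.sqrt 2 * m < ‖x‖ → 2 < ‖x‖ ^ 2 / m ^ 2 := by
    intro m hm x hx
    rw [lt_div_iff₀ (by positivity)]
    have h2 : Real.sqrt 2 ^ 2 = 2 := Real.sq_sqrt (by norm_num)
    nlinarith [hx, h2, mul_nonneg hsqrt2.le hm.le, norm_nonneg x]
  -- integrability facts
  have Iul : Integrable (fun x => u x * lap u x) := stmt10_integrable_mul_L2 hu2 hlap2
  have Iuu : Integrable (fun x => (u x) ^ 2) := hu2.integrable_sq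
  have Igg : Integrable (fun x => ‖gradient u x‖ ^ 2) := by
    have h := hgrad2.norm.integrable_sq
    simpa using h
  have Iug : Integrable (fun x => ‖u x‖ * ‖gradient u x‖) :=
    stmt10_integrable_mul_L2 hu2.norm hgrad2.norm
  -- eventual vanishing of ρ_j at a fixed point
  have hevzero : ∀ x : EuclideanSpace ℝ (Fin n),
      ∀ᶠ (j : ℕ) in Filter.atTop, ρ (‖x‖ ^ 2 / (j:ℝ) ^ 2) = 0 := by
    intro x
    filter_upwards [Filter.eventually_ge_atTop (⌈‖x‖⌉₊ + 1)] with j hj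
    have hj1 : (0:ℝ) < (j:ℝ) := by
      have : 1 ≤ j := le_trans (Nat.le_add_left 1 _) hj
      exact_mod_cast Nat.lt_of_lt_of_le Nat.zero_lt_one this
    have hxj : ‖x‖ ≤ (j:ℝ) := by
      refine le_trans (Nat.le_ceil _) ?_
      exact_mod_cast le_trans (Nat.le_succ _) hj
    exact hψzero _ hj1 x hxj
  -- the key integration-by-parts identity with the extra compact cutoff
  have key : ∀ j : ℕ, 1 ≤ j →
      (∫ x, (1 - ρ (‖x‖ ^ 2 / (j:ℝ) ^ 2)) * (ρ (‖x‖ ^ 2 / k ^ 2) * (u x * lap u x)))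
      = -(∫ x, (1 - ρ (‖x‖ ^ 2 / (j:ℝ) ^ 2)) * (ρ (‖x‖ ^ 2 / k ^ 2) * ‖gradient u x‖ ^ 2))
        - (∫ x, (1 - ρ (‖x‖ ^ 2 / (j:ℝ) ^ 2)) * (u x * Dcut ρ k x (gradient u x)))
        + (∫ x, ρ (‖x‖ ^ 2 / k ^ 2) * (u x * Dcut ρ (j:ℝ) x (gradient u x))) := by
    intro j hj
    have hjpos : (0:ℝ) < (j:ℝ) := by exact_mod_cast Nat.lt_of_lt_of_le Nat.zero_lt_one hj
    set χ : EuclideanSpace ℝ (Fin n) → ℝ := fun x => 1 - ρ (‖x‖ ^ 2 / (j:ℝ) ^ 2) with hχdef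
    set ψ : EuclideanSpace ℝ (Fin n) → ℝ := fun x => ρ (‖x‖ ^ 2 / k ^ 2) with hψdef
    have hχx : ∀ x, χ x = 1 - ρ (‖x‖ ^ 2 / (j:ℝ) ^ 2) := fun _ => rfl
    have hψx : ∀ x, ψ x = ρ (‖x‖ ^ 2 / k ^ 2) := fun _ => rfl
    set w : EuclideanSpace ℝ (Fin n) → ℝ := fun x => χ x * ψ x * u x with hwdef
    set DP : EuclideanSpace ℝ (Fin n) → (EuclideanSpace ℝ (Fin n) →L[ℝ] ℝ) :=
      fun x => χ x • Dcut ρ k x + ψ x • -Dcut ρ (j:ℝ) x with hDPdef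
    set Dw : EuclideanSpace ℝ (Fin n) → (EuclideanSpace ℝ (Fin n) →L[ℝ] ℝ) :=
      fun x => (χ x * ψ x) • fderiv ℝ u x + u x • DP x with hDwdef
    -- derivatives
    have hχd : ∀ x, HasFDerivAt χ (-Dcut ρ (j:ℝ) x) x :=
      fun x => (stmt10_hasFDerivAt_cut hρ_C1 _ x).const_sub 1
    have hψd : ∀ x, HasFDerivAt ψ (Dcut ρ k x) x := fun x => stmt10_hasFDerivAt_cut hρ_C1 k x
    have hPd : ∀ x, HasFDerivAt (fun y => χ y * ψ y) (DP x) x := by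
      intro x
      exact (hχd x).mul (hψd x)
    have hud : ∀ x, HasFDerivAt u (fderiv ℝ u x) x :=
      fun x => (hu.differentiable (by norm_num) x).hasFDerivAt
    have hwd : ∀ x, HasFDerivAt w (Dw x) x := by
      intro x
      exact (hPd x).mul (hud x)
    -- vanishing outside a ball
    have hK2 : IsCompact (Metric.closedBall (0 : EuclideanSpace ℝ (Fin n)) (Real.sqrt 2 * j)) :=
      isCompact_closedBall _ _
    have hout : ∀ x : EuclideanSpace ℝ (Fin n),
        x ∉ Metric.closedBall (0 : EuclideanSpace ℝ (Fin n)) (Real.sqrt 2 * j) →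
        χ x = 0 ∧ Dcut ρ (j:ℝ) x = 0 := by
      intro x hx
      rw [Metric.mem_closedBall, dist_zero_right, not_le] at hx
      have hq := hq_gt (j:ℝ) hjpos x hx
      constructor
      · rw [hχx, hρ_one _ hq.le, sub_self]
      · rw [Dcut, stmt10_deriv_rho_zero_gt hρ_one hq, zero_mul, zero_smul]
    -- continuity
    have hχc : Continuous χ := continuous_const.sub (hψc _)
    have hψcc : Continuous ψ := hψc k
    have hwc : Continuous w := (hχc.mul hψcc).mul hucont
    have hDwC : Continuous Dw := by
      rw [hDwdef, hDPdef]
      exact ((hχc.mul hψcc).smul hfdu_cont).add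
        (hucont.smul ((hχc.smul (hDcutc k)).add (hψcc.smul ((hDcutc (j:ℝ)).neg))))
    -- integrability via compact support
    have hcs : ∀ f : EuclideanSpace ℝ (Fin n) → ℝ, Continuous f →
        (∀ x ∉ Metric.closedBall (0 : EuclideanSpace ℝ (Fin n)) (Real.sqrt 2 * j), f x = 0) →
        Integrable f := by
      intro f hf h0
      exact hf.integrable_of_hasCompactSupport (HasCompactSupport.intro hK2 h0)
    have int1 : ∀ i : Fin n, Integrable (fun x =>
        w x * fderiv ℝ (fun y => fderiv ℝ u y (EuclideanSpace.single i 1)) x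
          (EuclideanSpace.single i 1)) := by
      intro i
      refine hcs _ (hwc.mul (hdgic i)) fun x hx => ?_
      rw [hwdef]
      simp [(hout x hx).1]
    have int2 : ∀ i : Fin n, Integrable (fun x =>
        Dw x (EuclideanSpace.single i 1) * fderiv ℝ u x (EuclideanSpace.single i 1)) := by
      intro i
      refine hcs _ ((hDwC.clm_apply continuous_const).mul ((hgi1 i).continuous)) fun x hx => ?_
      rw [hDwdef, hDPdef]
      simp [(hout x hx).1, (hout x hx).2]
    have int3 : ∀ i : Fin n, Integrable (fun x =>
        w x * fderiv ℝ u x (EuclideanSpace.single i 1)) := by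
      intro i
      refine hcs _ (hwc.mul ((hgi1 i).continuous)) fun x hx => ?_
      rw [hwdef]
      simp [(hout x hx).1]
    -- integration by parts in each coordinate direction
    have ibp : ∀ i : Fin n,
        (∫ x, w x * fderiv ℝ (fun y => fderiv ℝ u y (EuclideanSpace.single i 1)) x
            (EuclideanSpace.single i 1))
          = -∫ x, Dw x (EuclideanSpace.single i 1) * fderiv ℝ u x (EuclideanSpace.single i 1) := by
      intro i
      have hfd : ∀ x, fderiv ℝ w x = Dw x := fun x => (hwd x).fderiv
      have hdw : Differentiable ℝ w := fun x => (hwd x).differentiableAt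
      have hdg : Differentiable ℝ (fun y => fderiv ℝ u y (EuclideanSpace.single i 1)) :=
        (hgi1 i).differentiable one_ne_zero
      refine Eq.trans (integral_mul_fderiv_eq_neg_fderiv_mul_of_integrable
        ?_ (int1 i) (int3 i) (fun x _ => hdw x) (fun x _ => hdg x)) ?_
      · simp only [hfd]
        exact int2 i
      · simp only [hfd]
    -- summing over coordinates
    have hL : (∫ x, w x * lap u x) = ∑ i : Fin n, ∫ x,
        w x * fderiv ℝ (fun y => fderiv ℝ u y (EuclideanSpace.single i 1)) x
          (EuclideanSpace.single i 1) := by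
      rw [← integral_finset_sum _ (fun i _ => int1 i)]
      congr 1
      funext x
      rw [lap, Finset.mul_sum]
    have hR : (∑ i : Fin n, ∫ x,
        Dw x (EuclideanSpace.single i 1) * fderiv ℝ u x (EuclideanSpace.single i 1))
        = ∫ x, Dw x (gradient u x) := by
      rw [← integral_finset_sum _ (fun i _ => int2 i)]
      congr 1
      funext x
      exact stmt10_sum_clm_mul_fderiv (Dw x) u x
    have main : (∫ x, w x * lap u x) = -∫ x, Dw x (gradient u x) := by
      rw [hL, ← hR]
      rw [Finset.sum_congr rfl fun i _ => ibp i]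
      rw [← Finset.sum_neg_distrib]
    -- expanding the derivative term
    have hexp : ∀ x, Dw x (gradient u x)
        = χ x * (ψ x * ‖gradient u x‖ ^ 2)
          + (χ x * (u x * Dcut ρ k x (gradient u x))
            - ψ x * (u x * Dcut ρ (j:ℝ) x (gradient u x))) := by
      intro x
      rw [hDwdef, hDPdef]
      simp only [ContinuousLinearMap.add_apply, ContinuousLinearMap.smul_apply,
        ContinuousLinearMap.neg_apply, smul_eq_mul]
      rw [stmt10_norm_grad_sq u x]
      ring
    -- integrability of the three pieces
    have intB : Integrable (fun x => χ x * (ψ x * ‖gradient u x‖ ^ 2)) := by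
      refine hcs _ (hχc.mul (hψcc.mul ((hgradcont.norm).pow 2))) fun x hx => ?_
      rw [(hout x hx).1, zero_mul]
    have intC : Integrable (fun x => χ x * (u x * Dcut ρ k x (gradient u x))) := by
      refine hcs _ (hχc.mul (hucont.mul (hDgradc k))) fun x hx => ?_
      rw [(hout x hx).1, zero_mul]
    have intD : Integrable (fun x => ψ x * (u x * Dcut ρ (j:ℝ) x (gradient u x))) := by
      refine hcs _ (hψcc.mul (hucont.mul (hDgradc _))) fun x hx => ?_
      simp [(hout x hx).2]
    have hsplit : (∫ x, Dw x (gradient u x))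
        = (∫ x, χ x * (ψ x * ‖gradient u x‖ ^ 2))
          + ((∫ x, χ x * (u x * Dcut ρ k x (gradient u x)))
            - ∫ x, ψ x * (u x * Dcut ρ (j:ℝ) x (gradient u x))) := by
      calc (∫ x, Dw x (gradient u x))
          = ∫ x, (χ x * (ψ x * ‖gradient u x‖ ^ 2)
              + (χ x * (u x * Dcut ρ k x (gradient u x))
                - ψ x * (u x * Dcut ρ (j:ℝ) x (gradient u x)))) := by
            congr 1
            funext x
            exact hexp x
        _ = (∫ x, χ x * (ψ x * ‖gradient u x‖ ^ 2))
            + ∫ x, (χ x * (u x * Dcut ρ k x (gradient u x))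
                - ψ x * (u x * Dcut ρ (j:ℝ) x (gradient u x))) :=
            integral_add intB (intC.sub intD)
        _ = (∫ x, χ x * (ψ x * ‖gradient u x‖ ^ 2))
            + ((∫ x, χ x * (u x * Dcut ρ k x (gradient u x)))
              - ∫ x, ψ x * (u x * Dcut ρ (j:ℝ) x (gradient u x))) := by
            rw [integral_sub intC intD]
    -- put everything together
    have e1 : (∫ x, (1 - ρ (‖x‖ ^ 2 / (j:ℝ) ^ 2)) * (ρ (‖x‖ ^ 2 / k ^ 2) * (u x * lap u x)))
        = ∫ x, w x * lap u x := by
      congr 1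
      funext x
      rw [hwdef]
      simp only [hχx, hψx]
      ring
    have e2 : (∫ x, (1 - ρ (‖x‖ ^ 2 / (j:ℝ) ^ 2)) * (ρ (‖x‖ ^ 2 / k ^ 2) * ‖gradient u x‖ ^ 2))
        = ∫ x, χ x * (ψ x * ‖gradient u x‖ ^ 2) := by
      congr 1
    have e3 : (∫ x, (1 - ρ (‖x‖ ^ 2 / (j:ℝ) ^ 2)) * (u x * Dcut ρ k x (gradient u x)))
        = ∫ x, χ x * (u x * Dcut ρ k x (gradient u x)) := by
      congr 1
    have e4 : (∫ x, ρ (‖x‖ ^ 2 / k ^ 2) * (u x * Dcut ρ (j:ℝ) x (gradient u x)))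
        = ∫ x, ψ x * (u x * Dcut ρ (j:ℝ) x (gradient u x)) := by
      congr 1
    rw [e1, e2, e3, e4, main, hsplit]
    ring

  -- limits of the four integral sequences
  have TA : Filter.Tendsto (fun j : ℕ =>
      ∫ x, (1 - ρ (‖x‖ ^ 2 / (j:ℝ) ^ 2)) * (ρ (‖x‖ ^ 2 / k ^ 2) * (u x * lap u x)))
      Filter.atTop (nhds (∫ x, ρ (‖x‖ ^ 2 / k ^ 2) * (u x * lap u x))) := by
    refine tendsto_integral_of_dominated_convergence (fun x => ‖u x * lap u x‖)
      (fun j => ?_) Iul.norm (fun j => Filter.Eventually.of_forall fun x => ?_)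
      (Filter.Eventually.of_forall fun x => ?_)
    · exact ((continuous_const.sub (hψc _)).mul
        ((hψc k).mul (hucont.mul hlapc))).aestronglyMeasurable
    · have h1 := hψ01 (j:ℝ) x
      have h2 := hψ01 k x
      rw [Real.norm_eq_abs, abs_mul, abs_mul]
      calc |1 - ρ (‖x‖ ^ 2 / (j:ℝ) ^ 2)| * (|ρ (‖x‖ ^ 2 / k ^ 2)| * |u x * lap u x|)
          ≤ 1 * (1 * |u x * lap u x|) := by
            gcongr
            · rw [abs_le]; constructor <;> linarith [h1.1, h1.2]
            · rw [abs_le]; constructor <;> linarith [h2.1, h2.2]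
        _ = ‖u x * lap u x‖ := by rw [Real.norm_eq_abs]; ring
    · refine Filter.Tendsto.congr' ?_ tendsto_const_nhds
      filter_upwards [hevzero x] with j hj
      rw [hj]; ring
  have TB : Filter.Tendsto (fun j : ℕ =>
      ∫ x, (1 - ρ (‖x‖ ^ 2 / (j:ℝ) ^ 2)) * (ρ (‖x‖ ^ 2 / k ^ 2) * ‖gradient u x‖ ^ 2))
      Filter.atTop (nhds (∫ x, ρ (‖x‖ ^ 2 / k ^ 2) * ‖gradient u x‖ ^ 2)) := by
    refine tendsto_integral_of_dominated_convergence (fun x => ‖gradient u x‖ ^ 2)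
      (fun j => ?_) Igg (fun j => Filter.Eventually.of_forall fun x => ?_)
      (Filter.Eventually.of_forall fun x => ?_)
    · exact ((continuous_const.sub (hψc _)).mul
        ((hψc k).mul (hgradcont.norm.pow 2))).aestronglyMeasurable
    · have h1 := hψ01 (j:ℝ) x
      have h2 := hψ01 k x
      rw [Real.norm_eq_abs, abs_mul, abs_mul]
      calc |1 - ρ (‖x‖ ^ 2 / (j:ℝ) ^ 2)| * (|ρ (‖x‖ ^ 2 / k ^ 2)| * |‖gradient u x‖ ^ 2|)
          ≤ 1 * (1 * |‖gradient u x‖ ^ 2|) := by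
            gcongr
            · rw [abs_le]; constructor <;> linarith [h1.1, h1.2]
            · rw [abs_le]; constructor <;> linarith [h2.1, h2.2]
        _ = ‖gradient u x‖ ^ 2 := by rw [abs_of_nonneg (by positivity)]; ring
    · refine Filter.Tendsto.congr' ?_ tendsto_const_nhds
      filter_upwards [hevzero x] with j hj
      rw [hj]; ring
  have hptC : ∀ x : EuclideanSpace ℝ (Fin n),
      ‖u x * Dcut ρ k x (gradient u x)‖ ≤ (K / k) * (‖u x‖ * ‖gradient u x‖) := by
    intro x
    rw [norm_mul]
    calc ‖u x‖ * ‖Dcut ρ k x (gradient u x)‖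
        ≤ ‖u x‖ * ((K / k) * ‖gradient u x‖) := by
          gcongr
          exact ((Dcut ρ k x).le_opNorm _).trans
            (mul_le_mul_of_nonneg_right (hDk x) (norm_nonneg _))
      _ = (K / k) * (‖u x‖ * ‖gradient u x‖) := by ring
  have TC : Filter.Tendsto (fun j : ℕ =>
      ∫ x, (1 - ρ (‖x‖ ^ 2 / (j:ℝ) ^ 2)) * (u x * Dcut ρ k x (gradient u x)))
      Filter.atTop (nhds (∫ x, u x * Dcut ρ k x (gradient u x))) := by
    refine tendsto_integral_of_dominated_convergence
      (fun x => (K / k) * (‖u x‖ * ‖gradient u x‖))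
      (fun j => ?_) (Iug.const_mul _) (fun j => Filter.Eventually.of_forall fun x => ?_)
      (Filter.Eventually.of_forall fun x => ?_)
    · exact ((continuous_const.sub (hψc _)).mul
        (hucont.mul (hDgradc k))).aestronglyMeasurable
    · have h1 := hψ01 (j:ℝ) x
      rw [Real.norm_eq_abs, abs_mul]
      calc |1 - ρ (‖x‖ ^ 2 / (j:ℝ) ^ 2)| * |u x * Dcut ρ k x (gradient u x)|
          ≤ 1 * ‖u x * Dcut ρ k x (gradient u x)‖ := by
            rw [Real.norm_eq_abs]
            gcongr
            rw [abs_le]; constructor <;> linarith [h1.1, h1.2]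
        _ ≤ (K / k) * (‖u x‖ * ‖gradient u x‖) := by rw [one_mul]; exact hptC x
    · refine Filter.Tendsto.congr' ?_ tendsto_const_nhds
      filter_upwards [hevzero x] with j hj
      rw [hj]; ring
  have TD : Filter.Tendsto (fun j : ℕ =>
      ∫ x, ρ (‖x‖ ^ 2 / k ^ 2) * (u x * Dcut ρ (j:ℝ) x (gradient u x)))
      Filter.atTop (nhds 0) := by
    have hptD : ∀ (j : ℕ) (x : EuclideanSpace ℝ (Fin n)),
        ‖ρ (‖x‖ ^ 2 / k ^ 2) * (u x * Dcut ρ (j:ℝ) x (gradient u x))‖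
          ≤ (K / j) * (‖u x‖ * ‖gradient u x‖) := by
      intro j x
      have h2 := hψ01 k x
      rw [Real.norm_eq_abs, abs_mul, abs_mul]
      calc |ρ (‖x‖ ^ 2 / k ^ 2)| * (|u x| * |Dcut ρ (j:ℝ) x (gradient u x)|)
          ≤ 1 * (|u x| * ((K / j) * ‖gradient u x‖)) := by
            gcongr
            · rw [abs_le]; constructor <;> linarith [h2.1, h2.2]
            · exact ((Dcut ρ (j:ℝ) x).le_opNorm _).trans
                (mul_le_mul_of_nonneg_right (hDnat j x) (norm_nonneg _))
        _ = (K / j) * (|u x| * ‖gradient u x‖) := by ring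
        _ = (K / j) * (‖u x‖ * ‖gradient u x‖) := by rw [Real.norm_eq_abs]
    have hintD : ∀ j : ℕ, Integrable (fun x =>
        ρ (‖x‖ ^ 2 / k ^ 2) * (u x * Dcut ρ (j:ℝ) x (gradient u x))) := by
      intro j
      refine (Iug.const_mul (K / j)).mono' ?_ (Filter.Eventually.of_forall (hptD j))
      exact ((hψc k).mul (hucont.mul (hDgradc _))).aestronglyMeasurable
    have hb : Filter.Tendsto (fun j : ℕ => K * (∫ x, ‖u x‖ * ‖gradient u x‖) / j)
        Filter.atTop (nhds 0) := tendsto_const_div_atTop_nhds_zero_nat _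
    refine squeeze_zero_norm (fun j => ?_) hb
    calc ‖∫ x, ρ (‖x‖ ^ 2 / k ^ 2) * (u x * Dcut ρ (j:ℝ) x (gradient u x))‖
        ≤ ∫ x, ‖ρ (‖x‖ ^ 2 / k ^ 2) * (u x * Dcut ρ (j:ℝ) x (gradient u x))‖ :=
          norm_integral_le_integral_norm _
      _ ≤ ∫ x, (K / j) * (‖u x‖ * ‖gradient u x‖) :=
          integral_mono (hintD j).norm (Iug.const_mul _) (hptD j)
      _ = (K / j) * ∫ x, ‖u x‖ * ‖gradient u x‖ := integral_const_mul _ _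
      _ = K * (∫ x, ‖u x‖ * ‖gradient u x‖) / j := by ring
  -- pass to the limit in the identity
  have hIntC : Integrable (fun x => u x * Dcut ρ k x (gradient u x)) := by
    refine (Iug.const_mul (K / k)).mono' ?_ (Filter.Eventually.of_forall hptC)
    exact (hucont.mul (hDgradc k)).aestronglyMeasurable
  have heq : (∫ x, ρ (‖x‖ ^ 2 / k ^ 2) * (u x * lap u x))
      = -(∫ x, ρ (‖x‖ ^ 2 / k ^ 2) * ‖gradient u x‖ ^ 2)
        - (∫ x, u x * Dcut ρ k x (gradient u x)) + 0 := by
    refine tendsto_nhds_unique TA ?_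
    refine Filter.Tendsto.congr' ?_ ((TB.neg.sub TC).add TD)
    filter_upwards [Filter.eventually_ge_atTop 1] with j hj
    exact (key j hj).symm
  -- final estimate
  have hCbound : |∫ x, u x * Dcut ρ k x (gradient u x)|
      ≤ (K / k) * ((∫ x, (u x) ^ 2) + ∫ x, ‖gradient u x‖ ^ 2) := by
    have hpt2 : ∀ x : EuclideanSpace ℝ (Fin n),
        ‖u x * Dcut ρ k x (gradient u x)‖
          ≤ (K / k) * ((u x) ^ 2 + ‖gradient u x‖ ^ 2) := by
      intro x
      refine (hptC x).trans ?_
      have hKk : 0 ≤ K / k := by positivity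
      have h1 : ‖u x‖ * ‖gradient u x‖ ≤ (u x) ^ 2 + ‖gradient u x‖ ^ 2 := by
        have hn : ‖u x‖ ^ 2 = (u x) ^ 2 := by rw [Real.norm_eq_abs, sq_abs]
        nlinarith [sq_nonneg (‖u x‖ - ‖gradient u x‖), sq_nonneg (‖u x‖ + ‖gradient u x‖),
          norm_nonneg (u x), norm_nonneg (gradient u x)]
      exact mul_le_mul_of_nonneg_left h1 hKk
    calc |∫ x, u x * Dcut ρ k x (gradient u x)|
        ≤ ∫ x, ‖u x * Dcut ρ k x (gradient u x)‖ := by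
          rw [← Real.norm_eq_abs]; exact norm_integral_le_integral_norm _
      _ ≤ ∫ x, (K / k) * ((u x) ^ 2 + ‖gradient u x‖ ^ 2) :=
          integral_mono hIntC.norm ((Iuu.add Igg).const_mul _) hpt2
      _ = (K / k) * ∫ x, ((u x) ^ 2 + ‖gradient u x‖ ^ 2) := integral_const_mul _ _
      _ = (K / k) * ((∫ x, (u x) ^ 2) + ∫ x, ‖gradient u x‖ ^ 2) := by
          rw [integral_add Iuu Igg]
  have habs := abs_le.1 hCbound
  rw [ge_iff_le]
  linarith [habs.1, habs.2]
end
end
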